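/- Let M be a simple connected matroid of rank d+1 ≥ 3 with two different Cremona bases b and b*. Then the support graph G_b(b*) is connected if and only if |b ∩ b*| = 1. -/

import Mathlib

open Set

variable {α : Type*}

/-- The set of non-basis elements on the line through `x` and `y`. -/
def Fij (M : Matroid α) (x y : α) : Set α := M.closure {x, y} \ {x, y}

/-- `b` is a Cremona basis: a base of `M` such that the sets
`Fij = cl{bᵢ,bⱼ} \ {bᵢ,bⱼ}` are pairwise disjoint with union `M.E \ b`. -/
def IsCremonaBasis (M : Matroid α) (b : Set α) : Prop :=
  M.IsBase b ∧
  (∀ x ∈ b, ∀ y ∈ b, ∀ x' ∈ b, ∀ y' ∈ b, x ≠ y → x' ≠ y' →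
    ({x, y} : Set α) ≠ {x', y'} → Disjoint (Fij M x y) (Fij M x' y')) ∧
  (⋃ x ∈ b, ⋃ y ∈ b, ⋃ _ : x ≠ y, Fij M x y) = M.E \ b

/-- The `b`-support of a set `S`. -/
def suppb (M : Matroid α) (b S : Set α) : Set α :=
  (b ∩ S) ∪ ⋃ x ∈ b, ⋃ y ∈ b, ⋃ _ : x ≠ y, ⋃ _ : (S ∩ Fij M x y).Nonempty, ({x, y} : Set α)

/-- Adjacency in the support graph `G_b(S)`: there is an edge between `x` and `y`
for each element of `S ∩ Fij M x y`. -/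
def Adjb (M : Matroid α) (b S : Set α) (x y : α) : Prop :=
  x ∈ b ∧ y ∈ b ∧ x ≠ y ∧ (S ∩ Fij M x y).Nonempty

/-- The support graph `G_b(S)` is connected. -/
def SuppConnected (M : Matroid α) (b S : Set α) : Prop :=
  ∀ x ∈ suppb M b S, ∀ y ∈ suppb M b S, Relation.ReflTransGen (Adjb M b S) x y

/-- The vertex set of the connected component of `x` in the support graph `G_b(S)`. -/
def compOf (M : Matroid α) (b S : Set α) (x : α) : Set α :=
  {y ∈ suppb M b S | Relation.ReflTransGen (Adjb M b S) x y}

/-- A matroid is simple if every pair of (not necessarily distinct) elements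
of the ground set is independent. -/
def MSimple (M : Matroid α) : Prop := ∀ e ∈ M.E, ∀ f ∈ M.E, M.Indep {e, f}

/-- A circuit: a minimal dependent set. -/
def MCircuit (M : Matroid α) (C : Set α) : Prop :=
  C ⊆ M.E ∧ ¬ M.Indep C ∧ ∀ x ∈ C, M.Indep (C \ {x})

/-- A matroid is connected if its ground set is nonempty and every two distinct
elements lie on a common circuit. -/
def MConnected (M : Matroid α) : Prop :=
  M.E.Nonempty ∧ ∀ e ∈ M.E, ∀ f ∈ M.E, e = f ∨ ∃ C, MCircuit M C ∧ e ∈ C ∧ f ∈ C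

/-- The rank of a set in a matroid: the supremum of cardinalities of independent subsets. -/
noncomputable def mRank (M : Matroid α) (X : Set α) : ℕ :=
  sSup {n | ∃ I, M.Indep I ∧ I ⊆ X ∧ I.ncard = n}


lemma simple_cl_singleton (M : Matroid α) (hs : ∀ e ∈ M.E, ∀ f ∈ M.E, M.Indep {e, f})
    {x y : α} (hx : x ∈ M.E) (hy : y ∈ M.E) (h : x ∈ M.closure {y}) : x = y := by
  by_contra hne
  have hI : M.Indep {x, y} := hs x hx y hy
  have h2 := hI.notMem_closure_sdiff_of_mem (mem_insert x {y})
  rw [Set.pair_diff_left hne] at h2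
  exact h2 h

lemma simple_not_mem_cl_empty (M : Matroid α) (hs : ∀ e ∈ M.E, ∀ f ∈ M.E, M.Indep {e, f})
    {x : α} (hx : x ∈ M.E) : x ∉ M.closure ∅ := by
  intro h
  have hI : M.Indep {x} := by simpa using hs x hx x hx
  have h2 := hI.notMem_closure_sdiff_of_mem rfl
  rw [Set.diff_self] at h2
  exact h2 h

/-- Modularity lemma over an independent set. -/
lemma mod_lemma (M : Matroid α) {S T X : Set α} (hT : T.Finite)
    (hdisj : Disjoint S T) (hST : M.Indep (S ∪ T)) (hX : X ⊆ M.closure S) :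
    M.closure (X ∪ T) ∩ M.closure S ⊆ M.closure X := by
  revert hdisj hST
  refine Set.Finite.induction_on _ hT ?_ ?_
  · intro _ _ u hu
    have := hu.1
    rwa [union_empty] at this
  · intro t T₀ htT₀ hT₀fin IH hdisj hST
    have hdisj₀ : Disjoint S T₀ := hdisj.mono_right (subset_insert _ _)
    have hST₀ : M.Indep (S ∪ T₀) := hST.subset (union_subset_union_right _ (subset_insert _ _))
    intro u hu
    by_cases hucl : u ∈ M.closure (X ∪ T₀)
    · exact IH hdisj₀ hST₀ ⟨hucl, hu.2⟩
    · exfalso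
      have h1 : u ∈ M.closure (insert t (X ∪ T₀)) \ M.closure (X ∪ T₀) := by
        refine ⟨?_, hucl⟩
        have he : X ∪ insert t T₀ = insert t (X ∪ T₀) := by rw [union_insert]
        rw [← he]; exact hu.1
      have h2 := Matroid.closure_exchange h1
      have h3 : insert u (X ∪ T₀) ⊆ M.closure (S ∪ T₀) := by
        refine insert_subset ?_ (union_subset ?_ ?_)
        · exact M.closure_subset_closure subset_union_left hu.2
        · exact hX.trans (M.closure_subset_closure subset_union_left)
        · exact (M.subset_closure (S ∪ T₀) hST₀.subset_ground).trans'
            subset_union_right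
      have h4 : t ∈ M.closure (S ∪ T₀) :=
        Matroid.closure_subset_closure_of_subset_closure h3 h2.1
      have htmem : t ∈ S ∪ insert t T₀ := Or.inr (mem_insert _ _)
      have h5 := hST.notMem_closure_sdiff_of_mem htmem
      have heq : (S ∪ insert t T₀) \ {t} = S ∪ T₀ := by
        have htS : t ∉ S := fun h => hdisj.ne_of_mem h (mem_insert _ _) rfl
        ext a
        simp only [mem_diff, mem_union, mem_insert_iff, mem_singleton_iff]
        constructor
        · rintro ⟨(h | rfl | h), hne⟩
          · exact Or.inl h
          · exact absurd rfl hne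
          · exact Or.inr h
        · rintro (h | h)
          · exact ⟨Or.inl h, fun hh => htS (hh ▸ h)⟩
          · exact ⟨Or.inr (Or.inr h), fun hh => htT₀ (hh ▸ h)⟩
      rw [heq] at h5
      exact h5 h4


lemma Fij_comm (M : Matroid α) (x y : α) : Fij M x y = Fij M y x := by
  unfold Fij; rw [Set.pair_comm]

lemma Fij_subset_ground (M : Matroid α) (x y : α) : Fij M x y ⊆ M.E :=
  diff_subset.trans (M.closure_subset_ground _)

lemma mem_cl_of_F {M : Matroid α} {x p q : α} (h : x ∈ Fij M p q) :
    x ∈ M.closure {p, q} := h.1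

lemma F_subset_diff {M : Matroid α} {b : Set α} (hb : IsCremonaBasis M b)
    {p q : α} (hp : p ∈ b) (hq : q ∈ b) (hpq : p ≠ q) : Fij M p q ⊆ M.E \ b := by
  intro x hx
  rw [← hb.2.2]
  simp only [mem_iUnion]
  exact ⟨p, hp, q, hq, hpq, hx⟩

lemma exists_F {M : Matroid α} {b : Set α} (hb : IsCremonaBasis M b)
    {x : α} (hx : x ∈ M.E) (hxb : x ∉ b) :
    ∃ p q, p ∈ b ∧ q ∈ b ∧ p ≠ q ∧ x ∈ Fij M p q := by
  have : x ∈ M.E \ b := ⟨hx, hxb⟩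
  rw [← hb.2.2] at this
  simp only [mem_iUnion] at this
  obtain ⟨p, hp, q, hq, hpq, h⟩ := this
  exact ⟨p, q, hp, hq, hpq, h⟩

lemma F_unique {M : Matroid α} {b : Set α} (hb : IsCremonaBasis M b)
    {p q r s x : α} (hp : p ∈ b) (hq : q ∈ b) (hr : r ∈ b) (hs : s ∈ b)
    (hpq : p ≠ q) (hrs : r ≠ s) (h1 : x ∈ Fij M p q) (h2 : x ∈ Fij M r s) :
    ({p, q} : Set α) = {r, s} := by
  by_contra hne
  exact (hb.2.1 p hp q hq r hr s hs hpq hrs hne).ne_of_mem h1 h2 rfl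

lemma interCl (M : Matroid α) {B S₁ S₂ : Set α} (hB : M.Indep B) (hBfin : B.Finite)
    (h1 : S₁ ⊆ B) (h2 : S₂ ⊆ B) :
    M.closure S₁ ∩ M.closure S₂ ⊆ M.closure (S₁ ∩ S₂) := by
  have hT : (S₁ \ S₂).Finite := (hBfin.subset h1).diff
  have hdisj : Disjoint S₂ (S₁ \ S₂) := disjoint_sdiff_right.mono_left le_rfl
  have hST : M.Indep (S₂ ∪ (S₁ \ S₂)) := hB.subset (union_subset h2 (diff_subset.trans h1))
  have hX : S₁ ∩ S₂ ⊆ M.closure S₂ :=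
    (inter_subset_right).trans (M.subset_closure S₂ (h2.trans hB.subset_ground))
  intro x hx
  have hx1 : x ∈ M.closure ((S₁ ∩ S₂) ∪ (S₁ \ S₂)) := by
    rw [Set.inter_union_diff]; exact hx.1
  exact mod_lemma M hT hdisj hST hX ⟨hx1, hx.2⟩

/-- An element of an independent set in the closure of a subset lies in the subset. -/
lemma mem_of_mem_cl_indep {M : Matroid α} {b S : Set α} {x : α} (hb : M.Indep b)
    (hxb : x ∈ b) (hS : S ⊆ b) (hx : x ∈ M.closure S) : x ∈ S := by
  by_contra hxS
  have h5 := hb.notMem_closure_sdiff_of_mem hxb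
  exact h5 (M.closure_subset_closure (subset_diff_singleton hS hxS) hx)

/-- Support monotonicity: if `x ∈ Fij p q` and `x ∈ cl S` with `S ⊆ b`, then `p, q ∈ S`. -/
lemma supp_mem_of_cl {M : Matroid α} {b : Set α} (hfin : M.E.Finite)
    (hsimple : ∀ e ∈ M.E, ∀ f ∈ M.E, M.Indep {e, f})
    (hb : IsCremonaBasis M b) {p q x : α} {S : Set α}
    (hp : p ∈ b) (hq : q ∈ b) (hpq : p ≠ q) (hx : x ∈ Fij M p q)
    (hS : S ⊆ b) (hxS : x ∈ M.closure S) : p ∈ S ∧ q ∈ S := by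
  have hbE : b ⊆ M.E := hb.1.subset_ground
  have hxE : x ∈ M.E := Fij_subset_ground M p q hx
  have hxb : x ∉ b := (F_subset_diff hb hp hq hpq hx).2
  have hpair : ({p, q} : Set α) ⊆ b := by
    intro a ha; rcases ha with rfl | ha; · exact hp
    · rcases ha with rfl; exact hq
  have hint := interCl M hb.1.indep (hfin.subset hbE) hpair hS ⟨mem_cl_of_F hx, hxS⟩
  constructor
  · by_contra hpS
    have hsub : ({p, q} : Set α) ∩ S ⊆ {q} := by
      intro a ⟨ha1, ha2⟩
      rcases ha1 with rfl | rfl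
      · exact absurd ha2 hpS
      · rfl
    have := M.closure_subset_closure hsub hint
    exact hxb ((simple_cl_singleton M hsimple hxE (hbE hq) this) ▸ hq)
  · by_contra hqS
    have hsub : ({p, q} : Set α) ∩ S ⊆ {p} := by
      intro a ⟨ha1, ha2⟩
      rcases ha1 with rfl | rfl
      · rfl
      · exact absurd ha2 hqS
    have := M.closure_subset_closure hsub hint
    exact hxb ((simple_cl_singleton M hsimple hxE (hbE hp) this) ▸ hp)

lemma simple_not_mem_cl_of_ne {M : Matroid α} (hs : ∀ e ∈ M.E, ∀ f ∈ M.E, M.Indep {e, f})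
    {x y : α} (hx : x ∈ M.E) (hy : y ∈ M.E) (hne : x ≠ y) : x ∉ M.closure {y} :=
  fun h => hne (simple_cl_singleton M hs hx hy h)

/-- Exchange for pairs: `x ∈ cl {y, w}`, `x ∉ cl {w}` gives `y ∈ cl {x, w}`. -/
lemma pair_exchange {M : Matroid α} {x y w : α}
    (h : x ∈ M.closure {y, w}) (h2 : x ∉ M.closure {w}) : y ∈ M.closure {x, w} := by
  have := Matroid.closure_exchange (M := M) (e := x) (f := y) (X := {w}) ⟨h, h2⟩
  exact this.1

lemma pair_set_eq {z q r s : α} (hr : r ∈ ({z, q} : Set α)) (hs : s ∈ ({z, q} : Set α))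
    (hrs : r ≠ s) : ({r, s} : Set α) = {z, q} := by
  rcases hr with rfl | hr
  · rcases hs with rfl | hs
    · exact absurd rfl hrs
    · rcases hs with rfl; rfl
  · rcases hr with rfl
    rcases hs with rfl | hs
    · exact Set.pair_comm _ _
    · rcases hs with rfl; exact absurd rfl hrs

lemma Fij_congr {M : Matroid α} {r s z q : α} (h : ({r, s} : Set α) = ({z, q} : Set α)) :
    Fij M r s = Fij M z q := by unfold Fij; rw [h]

/-- Trace lemma: if `z ∈ b` lies in the closure of `X`, then some element of `X`
is either `z` itself or lies on a `b`-line through `z`. -/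
lemma trace_lemma {M : Matroid α} {b : Set α} (hfin : M.E.Finite)
    (hsimple : ∀ e ∈ M.E, ∀ f ∈ M.E, M.Indep {e, f}) (hb : IsCremonaBasis M b)
    {z : α} {X : Set α} (hz : z ∈ b) (hX : X ⊆ M.E) (hzX : z ∈ M.closure X) :
    ∃ ξ ∈ X, ξ = z ∨ ∃ q, q ∈ b ∧ q ≠ z ∧ ξ ∈ Fij M z q := by
  classical
  set S : Set α := {r ∈ b | r ∈ X ∨ ∃ ξ ∈ X, ∃ q, q ∈ b ∧ q ≠ r ∧ ξ ∈ Fij M r q} with hS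
  have hSb : S ⊆ b := sep_subset _ _
  have hXS : X ⊆ M.closure S := by
    intro ξ hξ
    by_cases hξb : ξ ∈ b
    · exact M.mem_closure_of_mem (⟨hξb, Or.inl hξ⟩ : ξ ∈ S) (hSb.trans hb.1.subset_ground)
    · obtain ⟨p, q, hp, hq, hpq, hF⟩ := exists_F hb (hX hξ) hξb
      have hpS : p ∈ S := ⟨hp, Or.inr ⟨ξ, hξ, q, hq, Ne.symm hpq, hF⟩⟩
      have hqS : q ∈ S := ⟨hq, Or.inr ⟨ξ, hξ, p, hp, hpq, (Fij_comm M p q) ▸ hF⟩⟩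
      have : ({p, q} : Set α) ⊆ S := by
        intro a ha; rcases ha with rfl | ha
        · exact hpS
        · rcases ha with rfl; exact hqS
      exact M.closure_subset_closure this (mem_cl_of_F hF)
  have hzS : z ∈ S := by
    refine mem_of_mem_cl_indep hb.1.indep hz hSb ?_
    exact Matroid.closure_subset_closure_of_subset_closure hXS hzX
  rcases hzS.2 with h | ⟨ξ, hξ, q, hq, hqz, hF⟩
  · exact ⟨z, h, Or.inl rfl⟩
  · exact ⟨ξ, hξ, Or.inr ⟨q, hq, hqz, hF⟩⟩

/-- Cover shape: every `z ∈ b \ bs` is covered by a unique `bs`-line, which is either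
"mixed" (through a common basis element) or "double" (two parallel `bs`-edges). -/
lemma cover_shape {M : Matroid α} {b bs : Set α} (hfin : M.E.Finite)
    (hsimple : ∀ e ∈ M.E, ∀ f ∈ M.E, M.Indep {e, f})
    (hb : IsCremonaBasis M b) (hbs : IsCremonaBasis M bs)
    {z : α} (hz : z ∈ b) (hzbs : z ∉ bs) :
    ∃ f q, f ∈ bs ∧ f ∉ b ∧ q ∈ b ∧ q ≠ z ∧ f ∈ Fij M z q ∧
      ((q ∈ bs ∧ z ∈ Fij M q f) ∨
       (∃ γ, γ ∈ bs ∧ γ ∉ b ∧ γ ≠ f ∧ γ ∈ Fij M z q ∧ z ∈ Fij M γ f)) := by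
  have hbE : b ⊆ M.E := hb.1.subset_ground
  have hbsE : bs ⊆ M.E := hbs.1.subset_ground
  have hzE : z ∈ M.E := hbE hz
  obtain ⟨γ₀, δ₀, hγ₀, hδ₀, hγδ₀, hzF₀⟩ := exists_F hbs hzE hzbs
  -- trace z through {γ₀, δ₀}
  have hpair : ({γ₀, δ₀} : Set α) ⊆ M.E := by
    intro a ha; rcases ha with rfl | ha
    · exact hbsE hγ₀
    · rcases ha with rfl; exact hbsE hδ₀
  obtain ⟨ξ, hξmem, hξ⟩ := trace_lemma hfin hsimple hb hz hpair (mem_cl_of_F hzF₀)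
  simp only [mem_insert_iff, mem_singleton_iff] at hξmem
  have hξbs : ξ ∈ bs := by rcases hξmem with rfl | rfl; exacts [hγ₀, hδ₀]
  rcases hξ with rfl | ⟨q, hq, hqz, hF⟩
  · exact absurd hξbs hzbs
  -- f := ξ, the other element γ'
  obtain ⟨f, rfl⟩ : ∃ f, f = ξ := ⟨ξ, rfl⟩
  have hfbs : f ∈ bs := hξbs
  have hfnb : f ∉ b := (F_subset_diff hb hz hq (Ne.symm hqz) hF).2
  have hfE : f ∈ M.E := hbsE hfbs
  -- identify the other element of the covering pair
  obtain ⟨γ', hγ'bs, hγ'f, hzFγ'f⟩ :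
      ∃ γ', γ' ∈ bs ∧ γ' ≠ f ∧ z ∈ Fij M γ' f := by
    rcases hξmem with h | h
    · refine ⟨δ₀, hδ₀, ?_, ?_⟩
      · intro hc; exact hγδ₀ (h.symm.trans hc.symm)
      · rw [show Fij M δ₀ f = Fij M γ₀ δ₀ by rw [h, Fij_comm]]; exact hzF₀
    · refine ⟨γ₀, hγ₀, ?_, ?_⟩
      · intro hc; exact hγδ₀ (hc.trans h)
      · rw [show Fij M γ₀ f = Fij M γ₀ δ₀ by rw [h]]; exact hzF₀
  have hγ'E : γ' ∈ M.E := hbsE hγ'bs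
  have hzne_f : z ≠ f := fun h => hfnb (h ▸ hz)
  have hzne_γ' : z ≠ γ' := fun h => hzbs (h ▸ hγ'bs)
  by_cases hγ'b : γ' ∈ b
  · -- mixed case; show γ' = q
    have hzcl : z ∈ M.closure {f, γ'} := by
      rw [Set.pair_comm]; exact mem_cl_of_F hzFγ'f
    have hfex : f ∈ M.closure {z, γ'} := by
      refine pair_exchange hzcl (simple_not_mem_cl_of_ne hsimple hzE hγ'E hzne_γ')
    have hsub1 : ({z, γ'} : Set α) ⊆ b := by
      intro a ha; rcases ha with rfl | ha
      · exact hz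
      · rcases ha with rfl; exact hγ'b
    have hsub2 : ({z, q} : Set α) ⊆ b := by
      intro a ha; rcases ha with rfl | ha
      · exact hz
      · rcases ha with rfl; exact hq
    have hfint := interCl M hb.1.indep (hfin.subset hbE) hsub1 hsub2
      ⟨hfex, mem_cl_of_F hF⟩
    by_cases hγ'q : γ' = q
    · subst hγ'q
      exact ⟨f, γ', hfbs, hfnb, hγ'b, Ne.symm hzne_γ', hF,
        Or.inl ⟨hγ'bs, hzFγ'f⟩⟩
    · exfalso
      have hsub3 : ({z, γ'} : Set α) ∩ {z, q} ⊆ {z} := by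
        intro a ⟨ha1, ha2⟩
        rcases ha1 with rfl | ha1
        · rfl
        · rcases ha1 with rfl
          rcases ha2 with rfl | ha2
          · exact absurd rfl hzne_γ'
          · rcases ha2 with rfl; exact absurd rfl hγ'q
      have := M.closure_subset_closure hsub3 hfint
      exact hfnb ((simple_cl_singleton M hsimple hfE hzE this) ▸ hz)
  · -- double case
    obtain ⟨r, s, hr, hs, hrs, hγ'F⟩ := exists_F hb hγ'E hγ'b
    have hzcl : z ∈ M.closure {γ', f} := mem_cl_of_F hzFγ'f
    have hγ'ex : γ' ∈ M.closure {z, f} :=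
      pair_exchange hzcl (simple_not_mem_cl_of_ne hsimple hzE hfE hzne_f)
    have hcl2 : ({z, f} : Set α) ⊆ M.closure {z, q} := by
      intro a ha; rcases ha with rfl | ha
      · exact M.mem_closure_of_mem (mem_insert _ _) (by
          intro a ha; rcases ha with rfl | ha
          · exact hzE
          · rcases ha with rfl; exact hbE hq)
      · rcases ha with rfl; exact mem_cl_of_F hF
    have hγ'cl : γ' ∈ M.closure {z, q} :=
      Matroid.closure_subset_closure_of_subset_closure hcl2 hγ'ex
    have hsub2 : ({z, q} : Set α) ⊆ b := by
      intro a ha; rcases ha with rfl | ha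
      · exact hz
      · rcases ha with rfl; exact hq
    obtain ⟨hrS, hsS⟩ := supp_mem_of_cl hfin hsimple hb hr hs hrs hγ'F hsub2 hγ'cl
    have hFeq : Fij M r s = Fij M z q := Fij_congr (pair_set_eq hrS hsS hrs)
    exact ⟨f, q, hfbs, hfnb, hq, hqz, hF,
      Or.inr ⟨γ', hγ'bs, hγ'b, hγ'f, hFeq ▸ hγ'F, hzFγ'f⟩⟩

lemma mem_Fij_iff {M : Matroid α} {x p q : α} :
    x ∈ Fij M p q ↔ x ∈ M.closure {p, q} ∧ x ≠ p ∧ x ≠ q := by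
  simp [Fij, mem_diff, mem_insert_iff, not_or]

/-- Basic consequences of a double edge: `e, f ∈ bs` both on the `b`-line through `z, w`. -/
lemma double_basic {M : Matroid α} {b bs : Set α} (hfin : M.E.Finite)
    (hsimple : ∀ e ∈ M.E, ∀ f ∈ M.E, M.Indep {e, f})
    (hb : IsCremonaBasis M b) (hbs : IsCremonaBasis M bs)
    {z w e f : α} (hz : z ∈ b) (hw : w ∈ b) (hzw : z ≠ w)
    (he : e ∈ bs) (hf : f ∈ bs) (hef : e ≠ f)
    (heF : e ∈ Fij M z w) (hfF : f ∈ Fij M z w) :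
    z ∈ Fij M e f ∧ w ∈ Fij M e f ∧ z ∉ bs ∧ w ∉ bs ∧
      M.closure {z, w} ⊆ M.closure {e, f} := by
  have hbE : b ⊆ M.E := hb.1.subset_ground
  have hbsE : bs ⊆ M.E := hbs.1.subset_ground
  have hzE : z ∈ M.E := hbE hz
  have hwE : w ∈ M.E := hbE hw
  have heE : e ∈ M.E := hbsE he
  have hfE : f ∈ M.E := hbsE hf
  have henb : e ∉ b := (F_subset_diff hb hz hw hzw heF).2
  have hfnb : f ∉ b := (F_subset_diff hb hz hw hzw hfF).2
  have hew : e ≠ w := fun h => henb (h ▸ hw)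
  have hez : e ≠ z := fun h => henb (h ▸ hz)
  have hfw : f ≠ w := fun h => hfnb (h ▸ hw)
  have hfz : f ≠ z := fun h => hfnb (h ▸ hz)
  -- z ∈ cl {e, w}
  have hz_ew : z ∈ M.closure {e, w} :=
    pair_exchange (mem_cl_of_F heF) (simple_not_mem_cl_of_ne hsimple heE hwE hew)
  have hclzw_ew : M.closure {z, w} ⊆ M.closure {e, w} := by
    apply Matroid.closure_subset_closure_of_subset_closure
    exact pair_subset hz_ew (M.mem_closure_of_mem (by simp) (pair_subset heE hwE))
  -- f ∈ cl {e, w}, hence w ∈ cl {f, e}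
  have hf_ew : f ∈ M.closure {w, e} := by
    rw [pair_comm]; exact hclzw_ew (mem_cl_of_F hfF)
  have hw_fe : w ∈ M.closure {f, e} :=
    pair_exchange hf_ew (simple_not_mem_cl_of_ne hsimple hfE heE (Ne.symm hef))
  have hw_ef : w ∈ M.closure {e, f} := by rwa [pair_comm]
  -- z ∈ cl {e, f}
  have hclew_ef : M.closure {e, w} ⊆ M.closure {e, f} := by
    apply Matroid.closure_subset_closure_of_subset_closure
    exact pair_subset (M.mem_closure_of_mem (by simp) (pair_subset heE hfE)) hw_ef
  have hz_ef : z ∈ M.closure {e, f} := hclew_ef (hclzw_ew (M.mem_closure_of_mem (by simp)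
    (pair_subset hzE hwE)))
  have hzFij : z ∈ Fij M e f := mem_Fij_iff.2 ⟨hz_ef, hez.symm, hfz.symm⟩
  have hwFij : w ∈ Fij M e f := mem_Fij_iff.2 ⟨hw_ef, hew.symm, hfw.symm⟩
  have hznbs : z ∉ bs := by
    intro hzbs
    have hsub : ({e, f} : Set α) ⊆ bs \ {z} := by
      intro a ha; rcases ha with rfl | ha
      · exact ⟨he, hez⟩
      · rcases ha with rfl; exact ⟨hf, hfz⟩
    exact hbs.1.indep.notMem_closure_sdiff_of_mem hzbs
      (M.closure_subset_closure hsub hz_ef)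
  have hwnbs : w ∉ bs := by
    intro hwbs
    have hsub : ({e, f} : Set α) ⊆ bs \ {w} := by
      intro a ha; rcases ha with rfl | ha
      · exact ⟨he, hew⟩
      · rcases ha with rfl; exact ⟨hf, hfw⟩
    exact hbs.1.indep.notMem_closure_sdiff_of_mem hwbs
      (M.closure_subset_closure hsub hw_ef)
  exact ⟨hzFij, hwFij, hznbs, hwnbs, hclzw_ew.trans hclew_ef⟩

/-- Support of a single element as a small spanning set in `b`. -/
lemma supp_pair {M : Matroid α} {b : Set α} (hb : IsCremonaBasis M b)
    {ξ : α} (hξE : ξ ∈ M.E) :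
    ∃ S, S ⊆ b ∧ ξ ∈ M.closure S ∧
      ∀ r ∈ S, r = ξ ∨ ∃ q', q' ∈ b ∧ q' ≠ r ∧ ξ ∈ Fij M r q' := by
  by_cases hξb : ξ ∈ b
  · exact ⟨{ξ}, singleton_subset_iff.2 hξb, M.mem_closure_of_mem rfl
      (singleton_subset_iff.2 hξE), fun r hr => Or.inl hr⟩
  · obtain ⟨p, q, hp, hq, hpq, hF⟩ := exists_F hb hξE hξb
    refine ⟨{p, q}, pair_subset hp hq, mem_cl_of_F hF, ?_⟩
    intro r hr
    rcases hr with rfl | hr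
    · exact Or.inr ⟨q, hq, Ne.symm hpq, hF⟩
    · rcases hr with rfl
      exact Or.inr ⟨p, hp, hpq, (Fij_comm M p _) ▸ hF⟩

/-- If `(z,w)` carries a double `bs`-edge, then every `bs`-element on a `b`-line
through `z` lies on the line through `z` and `w`. -/
lemma edges_at_double {M : Matroid α} {b bs : Set α} (hfin : M.E.Finite)
    (hsimple : ∀ e ∈ M.E, ∀ f ∈ M.E, M.Indep {e, f})
    (hb : IsCremonaBasis M b) (hbs : IsCremonaBasis M bs)
    {z w e f : α} (hz : z ∈ b) (hw : w ∈ b) (hzw : z ≠ w)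
    (he : e ∈ bs) (hf : f ∈ bs) (hef : e ≠ f)
    (heF : e ∈ Fij M z w) (hfF : f ∈ Fij M z w)
    {g q : α} (hg : g ∈ bs) (hq : q ∈ b) (hqz : q ≠ z) (hgF : g ∈ Fij M z q) :
    q = w := by
  by_contra hqw
  have hbE : b ⊆ M.E := hb.1.subset_ground
  have hbsE : bs ⊆ M.E := hbs.1.subset_ground
  have hbsfin : bs.Finite := hfin.subset hbsE
  have hzE : z ∈ M.E := hbE hz
  have hqE : q ∈ M.E := hbE hq
  obtain ⟨hzFef, hwFef, hznbs, hwnbs, hclsub⟩ :=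
    double_basic hfin hsimple hb hbs hz hw hzw he hf hef heF hfF
  have henb : e ∉ b := (F_subset_diff hb hz hw hzw heF).2
  have hfnb : f ∉ b := (F_subset_diff hb hz hw hzw hfF).2
  have hgnb : g ∉ b := (F_subset_diff hb hz hq (Ne.symm hqz) hgF).2
  have hgE : g ∈ M.E := hbsE hg
  have hge : g ≠ e := by
    intro hc
    have := F_unique hb hz hq hz hw (Ne.symm hqz) hzw (hc ▸ hgF) heF
    rcases Set.pair_eq_pair_iff.1 this with ⟨_, h2⟩ | ⟨h1, _⟩
    · exact hqw h2
    · exact hzw h1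
  have hgf : g ≠ f := by
    intro hc
    have := F_unique hb hz hq hz hw (Ne.symm hqz) hzw (hc ▸ hgF) hfF
    rcases Set.pair_eq_pair_iff.1 this with ⟨_, h2⟩ | ⟨h1, _⟩
    · exact hqw h2
    · exact hzw h1
  have hefg_bs : ({e, f, g} : Set α) ⊆ bs :=
    insert_subset he (insert_subset hf (singleton_subset_iff.2 hg))
  have hef_sub : ({e, f} : Set α) ⊆ ({e, f, g} : Set α) := by
    intro a ha; simp only [mem_insert_iff, mem_singleton_iff] at ha ⊢; tauto
  -- q ∈ cl {e, f, g}
  have hgz : g ≠ z := fun h => hgnb (h ▸ hz)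
  have hgq : g ≠ q := fun h => hgnb (h ▸ hq)
  have hq_gz : q ∈ M.closure {g, z} := by
    refine pair_exchange ?_ (simple_not_mem_cl_of_ne hsimple hgE hzE hgz)
    rw [pair_comm]; exact mem_cl_of_F hgF
  have hqcl : q ∈ M.closure {e, f, g} := by
    refine Matroid.closure_subset_closure_of_subset_closure ?_ hq_gz
    refine pair_subset (M.mem_closure_of_mem (by simp) (hefg_bs.trans hbsE)) ?_
    exact M.closure_subset_closure hef_sub (mem_cl_of_F hzFef)
  by_cases hqbs : q ∈ bs
  · -- q would be in the closure of the rest of bs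
    have hsub : ({e, f, g} : Set α) ⊆ bs \ {q} := by
      intro a ha
      rcases ha with rfl | ha
      · exact ⟨he, fun h => henb ((mem_singleton_iff.1 h) ▸ hq)⟩
      rcases ha with rfl | ha
      · exact ⟨hf, fun h => hfnb ((mem_singleton_iff.1 h) ▸ hq)⟩
      · rcases ha with rfl; exact ⟨hg, fun h => hgnb ((mem_singleton_iff.1 h) ▸ hq)⟩
    exact hbs.1.indep.notMem_closure_sdiff_of_mem hqbs
      (M.closure_subset_closure hsub hqcl)
  · obtain ⟨h, q', hhbs, hhnb, hq'b, hq'q, hhF, shape⟩ :=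
      cover_shape hfin hsimple hb hbs hq hqbs
    rcases shape with ⟨hq'bs, hqFq'h⟩ | ⟨γ, hγbs, hγnb, hγh, hγF, hqFγh⟩
    · -- mixed cover of q
      have hint := interCl M hbs.1.indep hbsfin (pair_subset hq'bs hhbs) hefg_bs
        ⟨mem_cl_of_F hqFq'h, hqcl⟩
      have hempty : ({q', h} : Set α) ∩ ({e, f, g} : Set α) ⊆ (∅ : Set α) := by
        intro a ⟨ha1, ha2⟩
        exfalso
        have haF : a = h → False := by
          intro rfl1
          rcases ha2 with rfl | ha2
          · have := F_unique hb hq hq'b hz hw (Ne.symm hq'q) hzw (rfl1 ▸ hhF) heF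
            rcases Set.pair_eq_pair_iff.1 this with ⟨h1, _⟩ | ⟨h1, _⟩
            · exact hqz h1
            · exact hqw h1
          rcases ha2 with rfl | ha2
          · have := F_unique hb hq hq'b hz hw (Ne.symm hq'q) hzw (rfl1 ▸ hhF) hfF
            rcases Set.pair_eq_pair_iff.1 this with ⟨h1, _⟩ | ⟨h1, _⟩
            · exact hqz h1
            · exact hqw h1
          · rcases ha2 with rfl
            have := F_unique hb hq hq'b hz hq (Ne.symm hq'q) (Ne.symm hqz) (rfl1 ▸ hhF) hgF
            rcases Set.pair_eq_pair_iff.1 this with ⟨h1, _⟩ | ⟨_, h2⟩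
            · exact hqz h1
            · exact hznbs (h2 ▸ hq'bs)
        rcases ha1 with rfl | ha1
        · rcases ha2 with rfl | ha2
          · exact henb hq'b
          rcases ha2 with rfl | ha2
          · exact hfnb hq'b
          · rcases ha2 with rfl; exact hgnb hq'b
        · rcases ha1 with rfl; exact haF rfl
      have : q ∈ M.closure (∅ : Set α) := by
        have h2 := M.closure_subset_closure hempty hint
        simpa using h2
      exact simple_not_mem_cl_empty M hsimple hqE this
    · -- double cover of q
      by_cases hq'z : q' = z
      · have hγF' : γ ∈ Fij M q z := hq'z ▸ hγF
        have hhF' : h ∈ Fij M q z := hq'z ▸ hhF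
        obtain ⟨_, hz_gh, _, _, _⟩ :=
          double_basic hfin hsimple hb hbs hq hz hqz hγbs hhbs hγh hγF' hhF'
        have hpair := F_unique hbs hγbs hhbs he hf hγh hef hz_gh hzFef
        have heFqz : e ∈ Fij M q z := by
          rcases Set.pair_eq_pair_iff.1 hpair with ⟨h1, _⟩ | ⟨_, h2⟩
          · exact h1 ▸ hγF'
          · exact h2 ▸ hhF'
        have := F_unique hb hq hz hz hw hqz hzw heFqz heF
        rcases Set.pair_eq_pair_iff.1 this with ⟨h1, _⟩ | ⟨h1, _⟩
        · exact hqz h1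
        · exact hqw h1
      · have hz_gq : z ∈ M.closure {g, q} :=
          pair_exchange (mem_cl_of_F hgF) (simple_not_mem_cl_of_ne hsimple hgE hqE hgq)
        have hγhg_bs : ({γ, h, g} : Set α) ⊆ bs :=
          insert_subset hγbs (insert_subset hhbs (singleton_subset_iff.2 hg))
        have hzcl : z ∈ M.closure {γ, h, g} := by
          refine Matroid.closure_subset_closure_of_subset_closure ?_ hz_gq
          refine pair_subset (M.mem_closure_of_mem (by simp) (hγhg_bs.trans hbsE)) ?_
          refine M.closure_subset_closure ?_ (mem_cl_of_F hqFγh)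
          intro a ha; simp only [mem_insert_iff, mem_singleton_iff] at ha ⊢; tauto
        have hint := interCl M hbs.1.indep hbsfin (pair_subset he hf) hγhg_bs
          ⟨mem_cl_of_F hzFef, hzcl⟩
        have hempty : ({e, f} : Set α) ∩ ({γ, h, g} : Set α) ⊆ (∅ : Set α) := by
          intro a ⟨ha1, ha2⟩
          exfalso
          have key : ∀ x, x ∈ bs → x ∈ Fij M z w → x ≠ g → x ∈ ({γ, h, g} : Set α) → False := by
            intro x hxbs hxF hxg hxmem
            have hxq : x ∈ Fij M q q' := by
              rcases hxmem with rfl | hxmem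
              · exact hγF
              rcases hxmem with rfl | hxmem
              · exact hhF
              · rcases hxmem with rfl; exact absurd rfl hxg
            have := F_unique hb hq hq'b hz hw (Ne.symm hq'q) hzw hxq hxF
            rcases Set.pair_eq_pair_iff.1 this with ⟨h1, _⟩ | ⟨h1, _⟩
            · exact hqz h1
            · exact hqw h1
          rcases ha1 with rfl | ha1
          · exact key a he heF (Ne.symm hge) ha2
          · rcases ha1 with rfl; exact key a hf hfF (Ne.symm hgf) ha2
        have : z ∈ M.closure (∅ : Set α) := by
          have h2 := M.closure_subset_closure hempty hint
          simpa using h2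
        exact simple_not_mem_cl_empty M hsimple hzE this

/-- Any element of the ground set on a `b`-line through `z` (where `(z,w)` carries a
double `bs`-edge) must lie on the line through `z` and `w`. -/
lemma elems_at_double {M : Matroid α} {b bs : Set α} (hfin : M.E.Finite)
    (hsimple : ∀ e ∈ M.E, ∀ f ∈ M.E, M.Indep {e, f})
    (hb : IsCremonaBasis M b) (hbs : IsCremonaBasis M bs)
    {z w e f : α} (hz : z ∈ b) (hw : w ∈ b) (hzw : z ≠ w)
    (he : e ∈ bs) (hf : f ∈ bs) (hef : e ≠ f)
    (heF : e ∈ Fij M z w) (hfF : f ∈ Fij M z w)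
    {x q : α} (hxE : x ∈ M.E) (hq : q ∈ b) (hqz : q ≠ z) (hxF : x ∈ Fij M z q) :
    q = w := by
  by_cases hxbs : x ∈ bs
  · exact edges_at_double hfin hsimple hb hbs hz hw hzw he hf hef heF hfF hxbs hq hqz hxF
  by_contra hqw
  have hbE : b ⊆ M.E := hb.1.subset_ground
  have hbsE : bs ⊆ M.E := hbs.1.subset_ground
  have hzE : z ∈ M.E := hbE hz
  have hwE : w ∈ M.E := hbE hw
  have hqE : q ∈ M.E := hbE hq
  obtain ⟨hzFef, hwFef, hznbs, hwnbs, hclsub⟩ :=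
    double_basic hfin hsimple hb hbs hz hw hzw he hf hef heF hfF
  have henb : e ∉ b := (F_subset_diff hb hz hw hzw heF).2
  have hfnb : f ∉ b := (F_subset_diff hb hz hw hzw hfF).2
  have hxnb : x ∉ b := (F_subset_diff hb hz hq (Ne.symm hqz) hxF).2
  obtain ⟨γ, δ, hγbs, hδbs, hγδ, hxFγδ⟩ := exists_F hbs hxE hxbs
  obtain ⟨Sγ, hSγb, hγcl, hSγprop⟩ := supp_pair hb (hbsE hγbs)
  obtain ⟨Sδ, hSδb, hδcl, hSδprop⟩ := supp_pair hb (hbsE hδbs)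
  have hSb : Sγ ∪ Sδ ⊆ b := union_subset hSγb hSδb
  have hxcl : x ∈ M.closure (Sγ ∪ Sδ) := by
    refine Matroid.closure_subset_closure_of_subset_closure ?_ (mem_cl_of_F hxFγδ)
    exact pair_subset (M.closure_subset_closure subset_union_left hγcl)
      (M.closure_subset_closure subset_union_right hδcl)
  obtain ⟨hzS, hqS⟩ := supp_mem_of_cl hfin hsimple hb hz hq (Ne.symm hqz) hxF hSb hxcl
  -- z-side: some η ∈ {γ, δ} is a bs-edge through z, hence η ∈ {e, f}
  obtain ⟨η, hηmem, hηbs, hηFzw⟩ :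
      ∃ η, η ∈ ({γ, δ} : Set α) ∧ η ∈ bs ∧ η ∈ Fij M z w := by
    have get : ∀ ξ, ξ ∈ bs → ξ ∈ ({γ, δ} : Set α) →
        (z = ξ ∨ ∃ q', q' ∈ b ∧ q' ≠ z ∧ ξ ∈ Fij M z q') →
        ∃ η, η ∈ ({γ, δ} : Set α) ∧ η ∈ bs ∧ η ∈ Fij M z w := by
      intro ξ hξbs hξmem hprop
      rcases hprop with rfl | ⟨q', hq'b, hq'z, hξF⟩
      · exact absurd hξbs hznbs
      · have hq'w := edges_at_double hfin hsimple hb hbs hz hw hzw he hf hef heF hfF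
          hξbs hq'b hq'z hξF
        exact ⟨ξ, hξmem, hξbs, hq'w ▸ hξF⟩
    rcases hzS with hzS | hzS
    · exact get γ hγbs (by simp) (hSγprop z hzS)
    · exact get δ hδbs (by simp) (hSδprop z hzS)
  have hηef : η = e ∨ η = f := by
    by_contra hc
    push_neg at hc
    have hsub : ({e, f} : Set α) ⊆ bs \ {η} := by
      intro a ha; rcases ha with rfl | ha
      · exact ⟨he, fun h => hc.1 (mem_singleton_iff.1 h).symm⟩
      · rcases ha with rfl; exact ⟨hf, fun h => hc.2 (mem_singleton_iff.1 h).symm⟩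
    have : η ∈ M.closure (bs \ {η}) := by
      refine M.closure_subset_closure hsub (hclsub ?_)
      exact mem_cl_of_F hηFzw
    exact hbs.1.indep.notMem_closure_sdiff_of_mem hηbs this
  have hηnb : η ∉ b := by rcases hηef with rfl | rfl; exacts [henb, hfnb]
  have hηz : η ≠ z := fun h => hηnb (h ▸ hz)
  have hηq : η ≠ q := fun h => hηnb (h ▸ hq)
  have hxη : x ≠ η := fun h => hxbs (h ▸ hηbs)
  have hxq : x ≠ q := fun h => hxnb (h ▸ hq)
  -- q-side
  obtain ⟨ξ₂, hξ₂mem, hξ₂bs, hξ₂prop⟩ :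
      ∃ ξ₂, ξ₂ ∈ ({γ, δ} : Set α) ∧ ξ₂ ∈ bs ∧
        (q = ξ₂ ∨ ∃ q₂, q₂ ∈ b ∧ q₂ ≠ q ∧ ξ₂ ∈ Fij M q q₂) := by
    rcases hqS with hqS | hqS
    · exact ⟨γ, by simp, hγbs, hSγprop q hqS⟩
    · exact ⟨δ, by simp, hδbs, hSδprop q hqS⟩
  have hξ₂η : ξ₂ ≠ η := by
    intro hc
    rcases hξ₂prop with h1 | ⟨q₂, hq₂b, hq₂q, hξ₂F⟩
    · exact hηnb ((h1.trans hc) ▸ hq)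
    · rw [hc] at hξ₂F
      have := F_unique hb hq hq₂b hz hw (Ne.symm hq₂q) hzw hξ₂F hηFzw
      rcases Set.pair_eq_pair_iff.1 this with ⟨h1, _⟩ | ⟨h1, _⟩
      · exact hqz h1
      · exact hqw h1
  have hpairset : ({γ, δ} : Set α) = {η, ξ₂} := (pair_set_eq hηmem hξ₂mem (Ne.symm hξ₂η)).symm
  have hxclηξ : x ∈ M.closure {η, ξ₂} := by
    have := mem_cl_of_F hxFγδ
    rwa [hpairset] at this
  rcases hξ₂prop with h1 | ⟨q₂, hq₂b, hq₂q, hξ₂F⟩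
  · -- q = ξ₂ ∈ b ∩ bs: mixed contradiction
    have hz_xq : z ∈ M.closure {x, q} :=
      pair_exchange (mem_cl_of_F hxF) (simple_not_mem_cl_of_ne hsimple hxE hqE hxq)
    have hz_ηq : z ∈ M.closure {η, q} := by
      refine Matroid.closure_subset_closure_of_subset_closure ?_ hz_xq
      refine pair_subset ?_ (M.mem_closure_of_mem (by simp) (pair_subset (hbsE hηbs) hqE))
      rw [← h1] at hxclηξ
      exact hxclηξ
    have hzFηq : z ∈ Fij M η q := mem_Fij_iff.2 ⟨hz_ηq, Ne.symm hηz, Ne.symm hqz⟩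
    have := F_unique hbs hηbs (h1 ▸ hξ₂bs) he hf hηq hef hzFηq hzFef
    have hqef : q = e ∨ q = f := by
      rcases Set.pair_eq_pair_iff.1 this with ⟨_, h2⟩ | ⟨_, h2⟩
      · exact Or.inr h2
      · exact Or.inl h2
    rcases hqef with rfl | rfl
    · exact henb hq
    · exact hfnb hq
  · -- ξ₂ is an edge at q
    have hξ₂cl : ξ₂ ∈ M.closure {x, η} := by
      refine pair_exchange ?_ (simple_not_mem_cl_of_ne hsimple hxE (hbsE hηbs) hxη)
      rwa [pair_comm] at hxclηξ
    have hsub3 : ({z, w, q} : Set α) ⊆ b :=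
      insert_subset hz (insert_subset hw (singleton_subset_iff.2 hq))
    have hξ₂cl2 : ξ₂ ∈ M.closure {z, w, q} := by
      refine Matroid.closure_subset_closure_of_subset_closure ?_ hξ₂cl
      refine pair_subset ?_ ?_
      · refine M.closure_subset_closure ?_ (mem_cl_of_F hxF)
        intro a ha; simp only [mem_insert_iff, mem_singleton_iff] at ha ⊢; tauto
      · refine M.closure_subset_closure ?_ (mem_cl_of_F hηFzw)
        intro a ha; simp only [mem_insert_iff, mem_singleton_iff] at ha ⊢; tauto
    obtain ⟨_, hq₂S⟩ := supp_mem_of_cl hfin hsimple hb hq hq₂b (Ne.symm hq₂q) hξ₂F hsub3 hξ₂cl2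
    rw [Fij_comm] at hξ₂F
    simp only [mem_insert_iff, mem_singleton_iff] at hq₂S
    rcases hq₂S with h | h | h
    · rw [h] at hξ₂F
      exact hqw (edges_at_double hfin hsimple hb hbs hz hw hzw he hf hef heF hfF
        hξ₂bs hq hqz hξ₂F)
    · rw [h] at hξ₂F
      have heF' : e ∈ Fij M w z := by rw [Fij_comm]; exact heF
      have hfF' : f ∈ Fij M w z := by rw [Fij_comm]; exact hfF
      exact hqz (edges_at_double hfin hsimple hb hbs hw hz (Ne.symm hzw) he hf hef heF' hfF'
        hξ₂bs hq hqw hξ₂F)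
    · exact hq₂q h

/-- Additivity: independent sets inside closures of disjoint parts of an independent set
have independent union. -/
lemma add_lemma (M : Matroid α) {S T A B : Set α} (hSfin : S.Finite) (hBfin : B.Finite)
    (hdisj : Disjoint S T) (hST : M.Indep (S ∪ T))
    (hA : M.Indep A) (hAS : A ⊆ M.closure S) (hBT : B ⊆ M.closure T) (hB : M.Indep B) :
    M.Indep (A ∪ B) := by
  revert hBT hB
  refine Set.Finite.induction_on _ hBfin ?_ ?_
  · intro _ _
    rwa [union_empty]
  · intro y B₀ hyB₀ hB₀fin IH hBT hB
    have hB₀T : B₀ ⊆ M.closure T := (subset_insert _ _).trans hBT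
    have hB₀ : M.Indep B₀ := hB.subset (subset_insert _ _)
    have hIH : M.Indep (A ∪ B₀) := IH hB₀T hB₀
    rw [union_insert]
    by_cases hyAB : y ∈ A ∪ B₀
    · rwa [insert_eq_of_mem hyAB]
    have hyE : y ∈ M.E := (M.closure_subset_ground T) (hBT (mem_insert _ _))
    have hycl : y ∉ M.closure (A ∪ B₀) := by
      intro hy
      have hmod := mod_lemma M (S := T) (T := S) (X := B₀) hSfin hdisj.symm
        (by rwa [union_comm]) hB₀T
      have hsub : A ∪ B₀ ⊆ M.closure (B₀ ∪ S) := by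
        refine union_subset ?_ ?_
        · exact hAS.trans (M.closure_subset_closure subset_union_right)
        · exact M.subset_closure_of_subset' subset_union_left
            (hB₀.subset_ground)
      have hy2 : y ∈ M.closure B₀ :=
        hmod ⟨Matroid.closure_subset_closure_of_subset_closure hsub hy,
          hBT (mem_insert _ _)⟩
      have := hB.notMem_closure_sdiff_of_mem (mem_insert y B₀)
      rw [insert_diff_self_of_notMem hyB₀] at this
      exact this hy2
    exact (hIH.insert_indep_iff_of_notMem hyAB).2 ⟨hyE, hycl⟩

/-- There is no double `bs`-edge on any `b`-line. -/
lemma no_double {M : Matroid α} {b bs : Set α} (hfin : M.E.Finite)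
    (hsimple : ∀ e ∈ M.E, ∀ f ∈ M.E, M.Indep {e, f})
    (hconn : M.E.Nonempty ∧ ∀ e ∈ M.E, ∀ f ∈ M.E, e = f ∨
      ∃ C, (C ⊆ M.E ∧ ¬ M.Indep C ∧ ∀ x ∈ C, M.Indep (C \ {x})) ∧ e ∈ C ∧ f ∈ C)
    (hb : IsCremonaBasis M b) (hbs : IsCremonaBasis M bs) (hcard : 3 ≤ b.ncard)
    {z w e f : α} (hz : z ∈ b) (hw : w ∈ b) (hzw : z ≠ w)
    (he : e ∈ bs) (hf : f ∈ bs) (hef : e ≠ f)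
    (heF : e ∈ Fij M z w) (hfF : f ∈ Fij M z w) : False := by
  have hbE : b ⊆ M.E := hb.1.subset_ground
  have hzE : z ∈ M.E := hbE hz
  have hwE : w ∈ M.E := hbE hw
  have hzwb : ({z, w} : Set α) ⊆ b := pair_subset hz hw
  -- find q₀ ∈ b outside {z, w}
  obtain ⟨q₀, hq₀b, hq₀zw⟩ : ∃ q₀ ∈ b, q₀ ∉ ({z, w} : Set α) := by
    by_contra hcon
    push_neg at hcon
    have : b.ncard ≤ 2 := by
      have h1 := Set.ncard_le_ncard hcon (Set.toFinite ({z, w} : Set α))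
      rwa [Set.ncard_pair hzw] at h1
    omega
  have hq₀z : q₀ ≠ z := fun h => hq₀zw (h ▸ mem_insert _ _)
  have hq₀w : q₀ ≠ w := fun h => hq₀zw (h ▸ (by simp : w ∈ ({z, w} : Set α)))
  have hq₀E : q₀ ∈ M.E := hbE hq₀b
  obtain ⟨C, hC, hzC, hq₀C⟩ := (hconn.2 z hzE q₀ hq₀E).resolve_left hq₀z.symm
  have hCE : C ⊆ M.E := hC.1
  -- dichotomy
  have hdich : ∀ x ∈ M.E, x ∉ M.closure {z, w} → x ∈ M.closure (b \ {z, w}) := by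
    intro x hxE hxcl
    by_cases hxb : x ∈ b
    · by_cases hxzw : x ∈ ({z, w} : Set α)
      · exact absurd (M.mem_closure_of_mem hxzw (pair_subset hzE hwE)) hxcl
      · exact M.mem_closure_of_mem ⟨hxb, hxzw⟩ (diff_subset.trans hbE)
    · obtain ⟨p, q, hp, hq, hpq, hxF⟩ := exists_F hb hxE hxb
      have key : ∀ p' q', p' ∈ b → q' ∈ b → p' ≠ q' → x ∈ Fij M p' q' → p' = z → False := by
        intro p' q' hp' hq' hpq' hxF' hp'z
        rw [hp'z] at hxF' hpq'
        have := elems_at_double hfin hsimple hb hbs hz hw hzw he hf hef heF hfF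
          hxE hq' (Ne.symm hpq') hxF'
        rw [this] at hxF'
        exact hxcl (mem_cl_of_F hxF')
      have keyw : ∀ p' q', p' ∈ b → q' ∈ b → p' ≠ q' → x ∈ Fij M p' q' → p' = w → False := by
        intro p' q' hp' hq' hpq' hxF' hp'w
        rw [hp'w] at hxF' hpq'
        have heF' : e ∈ Fij M w z := by rw [Fij_comm]; exact heF
        have hfF' : f ∈ Fij M w z := by rw [Fij_comm]; exact hfF
        have := elems_at_double hfin hsimple hb hbs hw hz (Ne.symm hzw) he hf hef heF' hfF'
          hxE hq' (Ne.symm hpq') hxF'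
        rw [this] at hxF'
        rw [Fij_comm] at hxF'
        exact hxcl (mem_cl_of_F hxF')
      have hxFqp : x ∈ Fij M q p := by rw [Fij_comm]; exact hxF
      by_cases hpz : p = z
      · exact absurd (key p q hp hq hpq hxF hpz) id
      by_cases hpw : p = w
      · exact absurd (keyw p q hp hq hpq hxF hpw) id
      by_cases hqz : q = z
      · exact absurd (key q p hq hp (Ne.symm hpq) hxFqp hqz) id
      by_cases hqw : q = w
      · exact absurd (keyw q p hq hp (Ne.symm hpq) hxFqp hqw) id
      · refine M.closure_subset_closure ?_ (mem_cl_of_F hxF)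
        intro a ha
        rcases ha with rfl | ha
        · exact ⟨hp, by simp [hpz, hpw]⟩
        · rcases ha with rfl; exact ⟨hq, by simp [hqz, hqw]⟩
  -- split the circuit
  set A := C ∩ M.closure {z, w} with hAdef
  set B := C \ M.closure {z, w} with hBdef
  have hq₀ncl : q₀ ∉ M.closure {z, w} := by
    intro h
    exact hq₀zw (mem_of_mem_cl_indep hb.1.indep hq₀b hzwb h)
  have hANq₀ : A ⊆ C \ {q₀} := by
    intro a ⟨ha1, ha2⟩
    exact ⟨ha1, fun h => hq₀ncl ((mem_singleton_iff.1 h) ▸ ha2)⟩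
  have hBNz : B ⊆ C \ {z} := by
    intro a ⟨ha1, ha2⟩
    refine ⟨ha1, fun h => ha2 ?_⟩
    rw [mem_singleton_iff.1 h]
    exact M.mem_closure_of_mem (mem_insert _ _) (pair_subset hzE hwE)
  have hAindep : M.Indep A := (hC.2.2 q₀ hq₀C).subset hANq₀
  have hBindep : M.Indep B := (hC.2.2 z hzC).subset hBNz
  have hBT : B ⊆ M.closure (b \ {z, w}) := fun x hx => hdich x (hCE hx.1) hx.2
  have hunion : ({z, w} : Set α) ∪ (b \ {z, w}) = b := Set.union_diff_cancel hzwb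
  have hindep : M.Indep (({z, w} : Set α) ∪ (b \ {z, w})) := by
    rw [hunion]; exact hb.1.indep
  have hAB : M.Indep (A ∪ B) := by
    refine add_lemma M (Set.toFinite _) (hfin.subset (hBNz.trans (diff_subset.trans hCE)))
      disjoint_sdiff_right hindep hAindep (fun a ha => ha.2) hBT hBindep
  rw [hAdef, hBdef, Set.inter_union_diff] at hAB
  exact hC.2.1 hAB

/-- Every `z ∈ b \ bs` has a "mixed" cover: an edge to a common basis element. -/
lemma mixed_cover {M : Matroid α} {b bs : Set α} (hfin : M.E.Finite)
    (hsimple : ∀ e ∈ M.E, ∀ f ∈ M.E, M.Indep {e, f})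
    (hconn : M.E.Nonempty ∧ ∀ e ∈ M.E, ∀ f ∈ M.E, e = f ∨
      ∃ C, (C ⊆ M.E ∧ ¬ M.Indep C ∧ ∀ x ∈ C, M.Indep (C \ {x})) ∧ e ∈ C ∧ f ∈ C)
    (hb : IsCremonaBasis M b) (hbs : IsCremonaBasis M bs) (hcard : 3 ≤ b.ncard)
    {z : α} (hz : z ∈ b) (hzbs : z ∉ bs) :
    ∃ c g, c ∈ b ∧ c ∈ bs ∧ c ≠ z ∧ g ∈ bs ∧ g ∉ b ∧ g ∈ Fij M z c ∧ z ∈ Fij M c g := by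
  obtain ⟨f, q, hfbs, hfnb, hq, hqz, hfF, shape⟩ := cover_shape hfin hsimple hb hbs hz hzbs
  rcases shape with ⟨hqbs, hzF⟩ | ⟨γ, hγbs, hγnb, hγf, hγF, hzF⟩
  · exact ⟨q, f, hq, hqbs, hqz, hfbs, hfnb, hfF, hzF⟩
  · exact absurd (no_double hfin hsimple hconn hb hbs hcard hz hq (Ne.symm hqz)
      hγbs hfbs hγf hγF hfF) id

lemma suppb_eq {M : Matroid α} {b bs : Set α} (hfin : M.E.Finite)
    (hsimple : ∀ e ∈ M.E, ∀ f ∈ M.E, M.Indep {e, f})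
    (hconn : M.E.Nonempty ∧ ∀ e ∈ M.E, ∀ f ∈ M.E, e = f ∨
      ∃ C, (C ⊆ M.E ∧ ¬ M.Indep C ∧ ∀ x ∈ C, M.Indep (C \ {x})) ∧ e ∈ C ∧ f ∈ C)
    (hb : IsCremonaBasis M b) (hbs : IsCremonaBasis M bs) (hcard : 3 ≤ b.ncard) :
    suppb M b bs = b := by
  apply subset_antisymm
  · intro a ha
    rcases ha with ha | ha
    · exact ha.1
    · simp only [mem_iUnion] at ha
      obtain ⟨x, hx, y, hy, _, _, hmem⟩ := ha
      rcases hmem with rfl | hmem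
      · exact hx
      · rcases hmem with rfl; exact hy
  · intro p hp
    by_cases hpbs : p ∈ bs
    · exact Or.inl ⟨hp, hpbs⟩
    · obtain ⟨c, g, hcb, hcbs, hcz, hgbs, hgnb, hgF, _⟩ :=
        mixed_cover hfin hsimple hconn hb hbs hcard hp hpbs
      refine Or.inr ?_
      simp only [mem_iUnion]
      exact ⟨p, hp, c, hcb, Ne.symm hcz, ⟨g, hgbs, hgF⟩, by simp⟩

/-- No `bs`-edge joins two elements of `b ∩ bs`. -/
lemma no_edge_common {M : Matroid α} {b bs : Set α}
    (hb : IsCremonaBasis M b) (hbs : IsCremonaBasis M bs)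
    {c c' g : α} (hc : c ∈ b ∩ bs) (hc' : c' ∈ b ∩ bs) (hcc' : c ≠ c')
    (hg : g ∈ bs) (hgF : g ∈ Fij M c c') : False := by
  have hgnb : g ∉ b := (F_subset_diff hb hc.1 hc'.1 hcc' hgF).2
  have hsub : ({c, c'} : Set α) ⊆ bs \ {g} := by
    intro a ha; rcases ha with rfl | ha
    · exact ⟨hc.2, fun h => hgnb ((mem_singleton_iff.1 h) ▸ hc.1)⟩
    · rcases ha with rfl; exact ⟨hc'.2, fun h => hgnb ((mem_singleton_iff.1 h) ▸ hc'.1)⟩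
  exact hbs.1.indep.notMem_closure_sdiff_of_mem hg
    (M.closure_subset_closure hsub (mem_cl_of_F hgF))

/-- No `bs`-edge joins two elements of `b \ bs`. -/
lemma no_edge_nonbs {M : Matroid α} {b bs : Set α} (hfin : M.E.Finite)
    (hsimple : ∀ e ∈ M.E, ∀ f ∈ M.E, M.Indep {e, f})
    (hconn : M.E.Nonempty ∧ ∀ e ∈ M.E, ∀ f ∈ M.E, e = f ∨
      ∃ C, (C ⊆ M.E ∧ ¬ M.Indep C ∧ ∀ x ∈ C, M.Indep (C \ {x})) ∧ e ∈ C ∧ f ∈ C)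
    (hb : IsCremonaBasis M b) (hbs : IsCremonaBasis M bs) (hcard : 3 ≤ b.ncard)
    {p q g : α} (hp : p ∈ b) (hpbs : p ∉ bs) (hq : q ∈ b) (hqbs : q ∉ bs) (hpq : p ≠ q)
    (hg : g ∈ bs) (hgF : g ∈ Fij M p q) : False := by
  obtain ⟨cp, gp, hcpb, hcpbs, hcpp, hgpbs, hgpnb, hgpF, hpF⟩ :=
    mixed_cover hfin hsimple hconn hb hbs hcard hp hpbs
  obtain ⟨cq, gq, hcqb, hcqbs, hcqq, hgqbs, hgqnb, hgqF, hqF⟩ :=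
    mixed_cover hfin hsimple hconn hb hbs hcard hq hqbs
  have hgnb : g ∉ b := (F_subset_diff hb hp hq hpq hgF).2
  have hggp : g ≠ gp := by
    intro hc
    have := F_unique hb hp hq hp hcpb hpq (Ne.symm hcpp) hgF (hc ▸ hgpF)
    rcases Set.pair_eq_pair_iff.1 this with ⟨_, h2⟩ | ⟨_, h2⟩
    · exact hqbs (h2.symm ▸ hcpbs)
    · exact hpq h2.symm
  have hggq : g ≠ gq := by
    intro hc
    have hgFqp : g ∈ Fij M q p := by rw [Fij_comm]; exact hgF
    have := F_unique hb hq hp hq hcqb (Ne.symm hpq) (Ne.symm hcqq) hgFqp (hc ▸ hgqF)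
    rcases Set.pair_eq_pair_iff.1 this with ⟨_, h2⟩ | ⟨_, h2⟩
    · exact hpbs (h2.symm ▸ hcqbs)
    · exact hpq h2
  have hsub : ({cp, gp, cq, gq} : Set α) ⊆ bs \ {g} := by
    intro a ha
    rcases ha with rfl | ha
    · exact ⟨hcpbs, fun h => hgnb ((mem_singleton_iff.1 h) ▸ hcpb)⟩
    rcases ha with rfl | ha
    · exact ⟨hgpbs, fun h => hggp (mem_singleton_iff.1 h).symm⟩
    rcases ha with rfl | ha
    · exact ⟨hcqbs, fun h => hgnb ((mem_singleton_iff.1 h) ▸ hcqb)⟩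
    · rcases ha with rfl
      exact ⟨hgqbs, fun h => hggq (mem_singleton_iff.1 h).symm⟩
  have hbsE : bs ⊆ M.E := hbs.1.subset_ground
  have hS4E : ({cp, gp, cq, gq} : Set α) ⊆ M.E := hsub.trans (diff_subset.trans hbsE)
  have hpqcl : ({p, q} : Set α) ⊆ M.closure {cp, gp, cq, gq} := by
    refine pair_subset ?_ ?_
    · refine M.closure_subset_closure ?_ (mem_cl_of_F hpF)
      intro a ha; simp only [mem_insert_iff, mem_singleton_iff] at ha ⊢; tauto
    · refine M.closure_subset_closure ?_ (mem_cl_of_F hqF)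
      intro a ha; simp only [mem_insert_iff, mem_singleton_iff] at ha ⊢; tauto
  have hgcl : g ∈ M.closure (bs \ {g}) := by
    refine M.closure_subset_closure hsub ?_
    exact Matroid.closure_subset_closure_of_subset_closure hpqcl (mem_cl_of_F hgF)
  exact hbs.1.indep.notMem_closure_sdiff_of_mem hg hgcl

lemma edge_gives_cover {M : Matroid α} {b bs : Set α}
    (hsimple : ∀ e ∈ M.E, ∀ f ∈ M.E, M.Indep {e, f})
    (hb : IsCremonaBasis M b) (hbs : IsCremonaBasis M bs)
    {z c g : α} (hz : z ∈ b) (hzbs : z ∉ bs) (hcb : c ∈ b) (hcbs : c ∈ bs)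
    (hg : g ∈ bs) (hczne : c ≠ z) (hgF : g ∈ Fij M z c) : z ∈ Fij M c g := by
  have hbE : b ⊆ M.E := hb.1.subset_ground
  have hbsE : bs ⊆ M.E := hbs.1.subset_ground
  have hgnb : g ∉ b := (F_subset_diff hb hz hcb (Ne.symm hczne) hgF).2
  have hgc : g ≠ c := fun h => hgnb (h ▸ hcb)
  have hzgc : z ∈ M.closure {g, c} :=
    pair_exchange (mem_cl_of_F hgF) (simple_not_mem_cl_of_ne hsimple (hbsE hg) (hbE hcb) hgc)
  refine mem_Fij_iff.2 ⟨?_, Ne.symm hczne, fun h => hgnb (h ▸ hz)⟩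
  rwa [pair_comm]

lemma base_ncard_eq_mRank {M : Matroid α} {b : Set α} (hfin : M.E.Finite) (hb : M.IsBase b) :
    sSup {n | ∃ I, M.Indep I ∧ I ⊆ M.E ∧ I.ncard = n} = b.ncard := by
  apply IsGreatest.csSup_eq
  constructor
  · exact ⟨b, hb.indep, hb.subset_ground, rfl⟩
  · rintro n ⟨I, hI, hIE, rfl⟩
    obtain ⟨B', hB', hIB'⟩ := hI.exists_isBase_superset
    calc I.ncard ≤ B'.ncard := Set.ncard_le_ncard hIB' (hfin.subset hB'.subset_ground)
      _ = b.ncard := hB'.ncard_eq_ncard_of_isBase hb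

lemma Adjb_symm {M : Matroid α} {b S : Set α} {x y : α} (h : Adjb M b S x y) :
    Adjb M b S y x := by
  obtain ⟨h1, h2, h3, g, hg1, hg2⟩ := h
  exact ⟨h2, h1, Ne.symm h3, g, hg1, by rwa [Fij_comm]⟩


/-- The support graph `G_b(b*)` is connected iff `|b ∩ b*| = 1`. -/
theorem stmt8 (M : Matroid α) (hfin : M.E.Finite) (hsimple : MSimple M)
    (hconn : MConnected M) (d : ℕ) (hd : 2 ≤ d) (hrk : mRank M M.E = d + 1)
    (b bs : Set α) (hb : IsCremonaBasis M b) (hbs : IsCremonaBasis M bs) (hne : b ≠ bs) :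
    SuppConnected M b bs ↔ (b ∩ bs).ncard = 1 := by
  have hs : ∀ e ∈ M.E, ∀ f ∈ M.E, M.Indep {e, f} := hsimple
  have hc : M.E.Nonempty ∧ ∀ e ∈ M.E, ∀ f ∈ M.E, e = f ∨
      ∃ C, (C ⊆ M.E ∧ ¬ M.Indep C ∧ ∀ x ∈ C, M.Indep (C \ {x})) ∧ e ∈ C ∧ f ∈ C := hconn
  have hbE : b ⊆ M.E := hb.1.subset_ground
  have hbncard : b.ncard = d + 1 := by
    have := base_ncard_eq_mRank hfin hb.1
    rw [mRank] at hrk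
    omega
  have hcard : 3 ≤ b.ncard := by omega
  have hfinbbs : (b ∩ bs).Finite := hfin.subset (inter_subset_left.trans hbE)
  -- b ∩ bs is nonempty
  have hinter_ne : (b ∩ bs).Nonempty := by
    have hzex : ∃ z ∈ b, z ∉ bs := by
      by_contra hcon
      push_neg at hcon
      exact hne (hb.1.eq_of_subset_isBase hbs.1 hcon)
    obtain ⟨z, hz, hzbs⟩ := hzex
    obtain ⟨c, g, hcb, hcbs, _, _, _, _, _⟩ := mixed_cover hfin hs hc hb hbs hcard hz hzbs
    exact ⟨c, hcb, hcbs⟩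
  have hsupp : suppb M b bs = b := suppb_eq hfin hs hc hb hbs hcard
  constructor
  · -- connected → |b ∩ bs| = 1
    intro hSC
    by_contra hk1
    have hk2 : 1 < (b ∩ bs).ncard := by
      have := (Set.ncard_pos hfinbbs).2 hinter_ne
      omega
    obtain ⟨c, c', hcmem, hc'mem, hcc'⟩ := (Set.one_lt_ncard_iff hfinbbs).1 hk2
    have hRG : Relation.ReflTransGen (Adjb M b bs) c c' :=
      hSC c (Or.inl hcmem) c' (Or.inl hc'mem)
    -- reachable set from c
    have hreach : ∀ y, Relation.ReflTransGen (Adjb M b bs) c y →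
        y = c ∨ (y ∈ b ∧ y ∉ bs ∧ (bs ∩ Fij M c y).Nonempty) := by
      intro y h
      induction h with
      | refl => exact Or.inl rfl
      | tail h1 hadj ih =>
        rename_i u v
        obtain ⟨hub, hvb, huv, g, hgbs, hgF⟩ := hadj
        rcases ih with heq | ⟨hub', hunbs, g₀, hg₀bs, hg₀F⟩
        · rw [heq] at hgF huv
          by_cases hvbs : v ∈ bs
          · exact (no_edge_common hb hbs hcmem ⟨hvb, hvbs⟩ huv hgbs hgF).elim
          · exact Or.inr ⟨hvb, hvbs, g, hgbs, hgF⟩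
        · by_cases hvbs : v ∈ bs
          · have hucne : c ≠ u := fun h => hunbs (h ▸ hcmem.2)
            have hg₀F' : g₀ ∈ Fij M u c := by rw [Fij_comm]; exact hg₀F
            have hcov1 := edge_gives_cover hs hb hbs hub' hunbs hcmem.1 hcmem.2
              hg₀bs hucne hg₀F'
            have hcov2 := edge_gives_cover hs hb hbs hub' hunbs hvb hvbs hgbs
              (Ne.symm huv) hgF
            have hg₀nb : g₀ ∉ b := (F_subset_diff hb hcmem.1 hub' hucne hg₀F).2
            have hgnb : g ∉ b := (F_subset_diff hb hub' hvb huv hgF).2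
            have hpair := F_unique hbs hcmem.2 hg₀bs hvbs hgbs
              (fun h => hg₀nb (h ▸ hcmem.1)) (fun h => hgnb (h ▸ hvb)) hcov1 hcov2
            rcases Set.pair_eq_pair_iff.1 hpair with ⟨h1, _⟩ | ⟨h1, _⟩
            · exact Or.inl h1.symm
            · exact absurd h1 (fun hh => hgnb (hh ▸ hcmem.1))
          · exact (no_edge_nonbs hfin hs hc hb hbs hcard hub' hunbs hvb hvbs
              huv hgbs hgF).elim
    rcases hreach c' hRG with h | ⟨_, hc'nbs, _⟩
    · exact hcc' h.symm
    · exact hc'nbs hc'mem.2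
  · -- |b ∩ bs| = 1 → connected
    intro hk
    obtain ⟨c, hceq⟩ := Set.ncard_eq_one.1 hk
    have hcmem : c ∈ b ∩ bs := by rw [hceq]; rfl
    have hstep : ∀ p ∈ b, p ≠ c → Adjb M b bs p c := by
      intro p hp hpc
      have hpbs : p ∉ bs := by
        intro hpbs
        have : p ∈ b ∩ bs := ⟨hp, hpbs⟩
        rw [hceq] at this
        exact hpc this
      obtain ⟨c₁, g, hc₁b, hc₁bs, hc₁p, hgbs, hgnb, hgF, _⟩ :=
        mixed_cover hfin hs hc hb hbs hcard hp hpbs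
      have hc₁c : c₁ = c := by
        have : c₁ ∈ b ∩ bs := ⟨hc₁b, hc₁bs⟩
        rw [hceq] at this
        exact this
      exact ⟨hp, hcmem.1, hpc, g, hgbs, hc₁c ▸ hgF⟩
    intro x hx y hy
    rw [hsupp] at hx hy
    have hxc : Relation.ReflTransGen (Adjb M b bs) x c := by
      by_cases h : x = c
      · exact h ▸ Relation.ReflTransGen.refl
      · exact Relation.ReflTransGen.single (hstep x hx h)
    have hcy : Relation.ReflTransGen (Adjb M b bs) c y := by
      by_cases h : y = c
      · exact h.symm ▸ Relation.ReflTransGen.refl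
      · exact Relation.ReflTransGen.single (Adjb_symm (hstep y hy h))
    exact hxc.trans hcy
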